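/- Let 0 < q < 1. For a finitely supported function ψ : ℕ → ℂ (ψ_m representing the value at the grid point x = q^{−2m}, so that x = (1−zz*)⁻¹ ranges over q^{−2ℤ₊}), define the radial Laplace–Beltrami operator □⁽⁰⁾ψ = −D x(1−q⁻¹x) D ψ, explicitly (□⁽⁰⁾ψ)_m = [(1−q^{−2m−2})(ψ_m − ψ_{m+1}) + (1−q^{−2m})(ψ_m − ψ_{m−1})] / (q^{−2m}(q⁻¹−q)²), where the second term is interpreted as 0 when m = 0 (its coefficient 1−q⁰ vanishes). Then the quadratic form identity Σ_{m=0}^∞ (□⁽⁰⁾ψ)_m · conj(ψ_m) · q^{−2m} = −q^{−2}(q⁻¹−q)^{−2} Σ_{m=0}^∞ q^{−2m}(1−q^{2m+2}) |ψ_m − ψ_{m+1}|² holds; in particular the quadratic form of □⁽⁰⁾ is real and non-positive. -/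

import Mathlib

/-- The radial part `□⁽⁰⁾ψ = −D x(1−q⁻¹x) D ψ` of the Laplace–Beltrami operator on the
quantum disc, acting on functions on the grid `q^{−2ℤ₊}` (encoded as `ψ : ℕ → ℂ`,
`ψ m` being the value at `x = q^{−2m}`).  The `ψ (m−1)` term at `m = 0` is harmless
since its coefficient `1 − q⁰ = 0` vanishes. -/
noncomputable def radialBox (q : ℝ) (ψ : ℕ → ℂ) (m : ℕ) : ℂ :=
  ((1 - ((q : ℂ) ^ (2 * m + 2))⁻¹) * (ψ m - ψ (m + 1)) +
      (1 - ((q : ℂ) ^ (2 * m))⁻¹) * (ψ m - ψ (m - 1))) /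
    (((q : ℂ) ^ (2 * m))⁻¹ * ((q : ℂ)⁻¹ - (q : ℂ)) ^ 2)

/-- Summation by parts for the radial Laplacian numerator. -/
lemma radialBox_abel (q : ℝ) (ψ : ℕ → ℂ) (L : ℕ) :
    ∑ m ∈ Finset.range (L + 1),
      ((1 - ((q : ℂ) ^ (2 * m + 2))⁻¹) * (ψ m - ψ (m + 1)) +
        (1 - ((q : ℂ) ^ (2 * m))⁻¹) * (ψ m - ψ (m - 1))) * (starRingEnd ℂ) (ψ m)
    = ∑ m ∈ Finset.range L,
        (1 - ((q : ℂ) ^ (2 * m + 2))⁻¹) * (ψ m - ψ (m + 1)) *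
          (starRingEnd ℂ) (ψ m - ψ (m + 1))
      + (1 - ((q : ℂ) ^ (2 * L + 2))⁻¹) * (ψ L - ψ (L + 1)) * (starRingEnd ℂ) (ψ L) := by
  induction L with
  | zero => simp
  | succ n ih =>
    rw [Finset.sum_range_succ, ih, Finset.sum_range_succ]
    have e1 : 2 * (n + 1) = 2 * n + 2 := by ring
    have e2 : n + 1 - 1 = n := rfl
    rw [e1, e2]
    simp only [map_sub]
    ring

theorem radialBox_quadratic_form (q : ℝ) (hq0 : 0 < q) (hq1 : q < 1)
    (ψ : ℕ → ℂ) (hψ : (Function.support ψ).Finite) :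
    (∑ᶠ m : ℕ, radialBox q ψ m * (starRingEnd ℂ) (ψ m) * ((q : ℂ) ^ (2 * m))⁻¹ =
      ↑(-(q ^ 2)⁻¹ * ((q⁻¹ - q) ^ 2)⁻¹ *
        ∑ᶠ m : ℕ, (q ^ (2 * m))⁻¹ * (1 - q ^ (2 * m + 2)) *
          ‖ψ m - ψ (m + 1)‖ ^ 2)) ∧
    (∑ᶠ m : ℕ, radialBox q ψ m * (starRingEnd ℂ) (ψ m) * ((q : ℂ) ^ (2 * m))⁻¹).im = 0 ∧
    (∑ᶠ m : ℕ, radialBox q ψ m * (starRingEnd ℂ) (ψ m) * ((q : ℂ) ^ (2 * m))⁻¹).re ≤ 0 := by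
  have hqne : q ≠ 0 := hq0.ne'
  have hqneC : (q : ℂ) ≠ 0 := by exact_mod_cast hqne
  have hKR : q⁻¹ - q ≠ 0 := by
    have h1 : 1 < q⁻¹ := (one_lt_inv_iff₀).2 ⟨hq0, hq1⟩
    intro h
    nlinarith [sub_eq_zero.1 h]
  have hKC : ((q : ℂ)⁻¹ - (q : ℂ)) ≠ 0 := by
    have : ((q⁻¹ - q : ℝ) : ℂ) ≠ 0 := by exact_mod_cast hKR
    push_cast at this
    exact this
  -- bound for the support
  set N := hψ.toFinset.sup id + 1 with hN
  have hzero : ∀ m, N ≤ m → ψ m = 0 := by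
    intro m hm
    by_contra h
    have hmem : m ∈ hψ.toFinset := hψ.mem_toFinset.2 h
    have := Finset.le_sup (f := id) hmem
    simp only [id] at this
    omega
  -- convert the finsums to finite sums
  have h1 : ∑ᶠ m : ℕ, radialBox q ψ m * (starRingEnd ℂ) (ψ m) * ((q : ℂ) ^ (2 * m))⁻¹
      = ∑ m ∈ Finset.range (N + 1),
          radialBox q ψ m * (starRingEnd ℂ) (ψ m) * ((q : ℂ) ^ (2 * m))⁻¹ := by
    apply finsum_eq_finset_sum_of_support_subset
    intro m hm
    simp only [Finset.coe_range, Set.mem_Iio]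
    by_contra hc
    have : ψ m = 0 := hzero m (by omega)
    simp [Function.mem_support, this] at hm
  have h2 : ∑ᶠ m : ℕ, (q ^ (2 * m))⁻¹ * (1 - q ^ (2 * m + 2)) *
        ‖ψ m - ψ (m + 1)‖ ^ 2
      = ∑ m ∈ Finset.range (N + 1), (q ^ (2 * m))⁻¹ * (1 - q ^ (2 * m + 2)) *
          ‖ψ m - ψ (m + 1)‖ ^ 2 := by
    apply finsum_eq_finset_sum_of_support_subset
    intro m hm
    simp only [Finset.coe_range, Set.mem_Iio]
    by_contra hc
    have h3 : ψ m = 0 := hzero m (by omega)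
    have h4 : ψ (m + 1) = 0 := hzero (m + 1) (by omega)
    simp [Function.mem_support, h3, h4] at hm
  -- the main identity
  have main : ∑ᶠ m : ℕ, radialBox q ψ m * (starRingEnd ℂ) (ψ m) * ((q : ℂ) ^ (2 * m))⁻¹ =
      ↑(-(q ^ 2)⁻¹ * ((q⁻¹ - q) ^ 2)⁻¹ *
        ∑ᶠ m : ℕ, (q ^ (2 * m))⁻¹ * (1 - q ^ (2 * m + 2)) *
          ‖ψ m - ψ (m + 1)‖ ^ 2) := by
    rw [h1, h2]
    -- rewrite each term of the LHS as numerator / K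
    have hterm : ∀ m : ℕ, radialBox q ψ m * (starRingEnd ℂ) (ψ m) * ((q : ℂ) ^ (2 * m))⁻¹
        = ((1 - ((q : ℂ) ^ (2 * m + 2))⁻¹) * (ψ m - ψ (m + 1)) +
            (1 - ((q : ℂ) ^ (2 * m))⁻¹) * (ψ m - ψ (m - 1))) * (starRingEnd ℂ) (ψ m) /
            ((q : ℂ)⁻¹ - (q : ℂ)) ^ 2 := by
      intro m
      have hp : ((q : ℂ) ^ (2 * m)) ≠ 0 := pow_ne_zero _ hqneC
      have hk2 : (((q : ℂ))⁻¹ - (q : ℂ)) ^ 2 ≠ 0 := pow_ne_zero _ hKC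
      rw [radialBox]
      generalize (((q : ℂ))⁻¹ - (q : ℂ)) ^ 2 = k at hk2 ⊢
      rw [div_mul_eq_mul_div, div_mul_eq_mul_div,
        div_eq_div_iff (mul_ne_zero (inv_ne_zero hp) hk2) hk2]
      ring
    calc ∑ m ∈ Finset.range (N + 1),
          radialBox q ψ m * (starRingEnd ℂ) (ψ m) * ((q : ℂ) ^ (2 * m))⁻¹
        = ∑ m ∈ Finset.range (N + 1),
            ((1 - ((q : ℂ) ^ (2 * m + 2))⁻¹) * (ψ m - ψ (m + 1)) +
              (1 - ((q : ℂ) ^ (2 * m))⁻¹) * (ψ m - ψ (m - 1))) * (starRingEnd ℂ) (ψ m) /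
              ((q : ℂ)⁻¹ - (q : ℂ)) ^ 2 := Finset.sum_congr rfl fun m _ => hterm m
      _ = (∑ m ∈ Finset.range (N + 1),
            ((1 - ((q : ℂ) ^ (2 * m + 2))⁻¹) * (ψ m - ψ (m + 1)) +
              (1 - ((q : ℂ) ^ (2 * m))⁻¹) * (ψ m - ψ (m - 1))) * (starRingEnd ℂ) (ψ m)) /
              ((q : ℂ)⁻¹ - (q : ℂ)) ^ 2 := by rw [Finset.sum_div]
      _ = (∑ m ∈ Finset.range (N + 1),
            (1 - ((q : ℂ) ^ (2 * m + 2))⁻¹) * (ψ m - ψ (m + 1)) *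
              (starRingEnd ℂ) (ψ m - ψ (m + 1))) / ((q : ℂ)⁻¹ - (q : ℂ)) ^ 2 := by
          rw [radialBox_abel q ψ N]
          conv_rhs => rw [Finset.sum_range_succ]
          rw [hzero N le_rfl, hzero (N + 1) (by omega)]
          simp
      _ = ↑(-(q ^ 2)⁻¹ * ((q⁻¹ - q) ^ 2)⁻¹ *
            ∑ m ∈ Finset.range (N + 1), (q ^ (2 * m))⁻¹ * (1 - q ^ (2 * m + 2)) *
              ‖ψ m - ψ (m + 1)‖ ^ 2) := by
          rw [Finset.mul_sum]
          push_cast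
          rw [Finset.sum_div]
          refine Finset.sum_congr rfl fun m _ => ?_
          rw [mul_assoc ((1 : ℂ) - ((q : ℂ) ^ (2 * m + 2))⁻¹), Complex.mul_conj]
          have hA : ((‖ψ m - ψ (m + 1)‖ : ℂ)) ^ 2
              = ((Complex.normSq (ψ m - ψ (m + 1)) : ℝ) : ℂ) := by
            rw [← Complex.ofReal_pow, Complex.sq_norm]
          rw [hA]
          have hp : ((q : ℂ) ^ (2 * m)) ≠ 0 := pow_ne_zero _ hqneC
          have he : (q : ℂ) ^ (2 * m + 2) = (q : ℂ) ^ (2 * m) * (q : ℂ) ^ 2 := by rw [pow_add]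
          rw [he]
          have hk2 : (((q : ℂ))⁻¹ - (q : ℂ)) ^ 2 ≠ 0 := pow_ne_zero _ hKC
          generalize (((q : ℂ))⁻¹ - (q : ℂ)) ^ 2 = k at hk2 ⊢
          generalize (q : ℂ) ^ (2 * m) = p at hp ⊢
          have hq2 : ((q : ℂ)) ^ 2 ≠ 0 := pow_ne_zero _ hqneC
          field_simp
          ring
  refine ⟨main, by rw [main]; exact Complex.ofReal_im _, ?_⟩
  rw [main, Complex.ofReal_re]
  apply mul_nonpos_of_nonpos_of_nonneg
  · have h3 : (0:ℝ) < (q ^ 2)⁻¹ := by positivity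
    have h4 : (0:ℝ) ≤ ((q⁻¹ - q) ^ 2)⁻¹ := by positivity
    nlinarith
  · rw [h2]
    apply Finset.sum_nonneg
    intro m _
    have h5 : q ^ (2 * m + 2) ≤ 1 := pow_le_one₀ hq0.le hq1.le
    have h6 : (0:ℝ) < (q ^ (2 * m))⁻¹ := by positivity
    have h7 : (0:ℝ) ≤ ‖ψ m - ψ (m + 1)‖ ^ 2 := by positivity
    exact mul_nonneg (mul_nonneg h6.le (by linarith)) h7
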